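/- Let (A_{ij}), (B_{ij}), ψ be a perfect strategy for the m×n quantum magic rectangle game of local dimensions (d_A,d_B). Then there exist an integer K ≥ 1, reals β_1,…,β_K > 0 with Σ_k β_k² = 1, and pairwise orthogonal unit vectors ψ_1,…,ψ_K ∈ ℂ^{d_A·d_B} such that: (i) ψ = Σ_{k=1}^K β_k ψ_k; (ii) each ψ_k is maximally entangled, i.e. ψ_k = (1/√{r_k}) Σ_{l∈L_k} u_l ⊗ v_l where the L_k are disjoint finite index sets of sizes r_k, (u_l) is an orthonormal family in ℂ^{d_A} and (v_l) is an orthonormal family in ℂ^{d_B} (over the union of all L_k); (iii) the values β_k/√{r_k} are pairwise distinct; and (iv) each ψ_k is itself a perfect quantum solution state for the same observables, i.e. ⟨ψ_k, (A_{ij} ⊗ B_{ij}) ψ_k⟩ = 1 for all i,j. -/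

import Mathlib

open Matrix Kronecker

lemma kron_mulVec {dA dB : ℕ} (A : Matrix (Fin dA) (Fin dA) ℂ) (B : Matrix (Fin dB) (Fin dB) ℂ)
    (X : Matrix (Fin dA) (Fin dB) ℂ) :
    (A ⊗ₖ B) *ᵥ (fun p : Fin dA × Fin dB => X p.1 p.2) = fun p => (A * X * Bᵀ) p.1 p.2 := by
  funext p
  simp only [mulVec, dotProduct, Fintype.sum_prod_type, kroneckerMap_apply, Matrix.mul_apply,
    transpose_apply, Finset.sum_mul, Finset.mul_sum]
  rw [Finset.sum_comm]
  exact Finset.sum_congr rfl fun b' _ => Finset.sum_congr rfl fun a' _ => by ring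

open scoped ComplexOrder in
lemma fixed_of_inner_one {n : Type*} [Fintype n] [DecidableEq n] (K : Matrix n n ℂ)
    (hK : K.IsHermitian)
    (hK2 : K * K = 1) (ψ : n → ℂ) (hψ : star ψ ⬝ᵥ ψ = 1)
    (hp : star ψ ⬝ᵥ (K *ᵥ ψ) = 1) : K *ᵥ ψ = ψ := by
  have h1 : star (K *ᵥ ψ) ⬝ᵥ (K *ᵥ ψ) = 1 := by
    rw [star_mulVec, ← dotProduct_mulVec, mulVec_mulVec, hK.eq, hK2, one_mulVec, hψ]
  have h3 : star (K *ᵥ ψ) ⬝ᵥ ψ = 1 := by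
    have := congrArg star hp
    rwa [star_one, star_dotProduct, star_star] at this
  have h0 : star (K *ᵥ ψ - ψ) ⬝ᵥ (K *ᵥ ψ - ψ) = 0 := by
    have hs : star (K *ᵥ ψ - ψ) = star (K *ᵥ ψ) - star ψ := by
      funext i; simp [Pi.sub_apply]
    rw [hs, sub_dotProduct, dotProduct_sub, dotProduct_sub, h1, h3, hψ, hp]
    ring
  exact sub_eq_zero.mp (dotProduct_star_self_eq_zero.mp h0)

lemma sum_conj_mul_eq_trace {dA dB : ℕ} (X Y : Matrix (Fin dA) (Fin dB) ℂ) :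
    ∑ p : Fin dA × Fin dB, star (X p.1 p.2) * Y p.1 p.2 = Matrix.trace (Xᴴ * Y) := by
  simp only [Matrix.trace, Matrix.diag, Matrix.mul_apply, conjTranspose_apply,
    Fintype.sum_prod_type]
  rw [Finset.sum_comm]

lemma indicator_mul {dA dB : ℕ} (U : Matrix (Fin dA) (Fin dA) ℂ) (N : Matrix (Fin dA) (Fin dB) ℂ)
    (S : Finset (Fin dA)) (a : Fin dA) (b : Fin dB) :
    (U * Matrix.diagonal (fun c => if c ∈ S then (1:ℂ) else 0) * N) a b
      = ∑ c ∈ S, U a c * N c b := by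
  rw [Matrix.mul_apply]
  simp only [Matrix.mul_diagonal]
  rw [show ∀ f : Fin dA → ℂ, ∑ c, f c = ∑ c ∈ Finset.univ, f c from fun _ => rfl]
  rw [← Finset.univ_inter S, ← Finset.sum_ite_mem]
  exact Finset.sum_congr rfl fun c _ => by by_cases h : c ∈ S <;> simp [h]

lemma inner_sums {dA dB : ℕ} (U : Matrix (Fin dA) (Fin dA) ℂ) (N : Matrix (Fin dA) (Fin dB) ℂ)
    (e : Fin dA → ℝ) (hUU : Uᴴ * U = 1) (hNN : N * Nᴴ = Matrix.diagonal (fun c => (e c : ℂ)))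
    (S S' : Finset (Fin dA)) :
    ∑ p : Fin dA × Fin dB, star ((∑ c ∈ S, U p.1 c * N c p.2)) * (∑ c ∈ S', U p.1 c * N c p.2)
      = ∑ c ∈ S ∩ S', (e c : ℂ) := by
  have hD : ∀ (T : Finset (Fin dA)),
      (Matrix.diagonal (fun c => if c ∈ T then (1:ℂ) else 0))ᴴ
        = Matrix.diagonal (fun c => if c ∈ T then (1:ℂ) else 0) := by
    intro T
    have h2 : (star fun c => if c ∈ T then (1:ℂ) else 0) = fun c => if c ∈ T then (1:ℂ) else 0 := by
      funext c; by_cases h : c ∈ T <;> simp [h]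
    rw [Matrix.diagonal_conjTranspose, h2]
  calc ∑ p : Fin dA × Fin dB, star ((∑ c ∈ S, U p.1 c * N c p.2)) * (∑ c ∈ S', U p.1 c * N c p.2)
      = ∑ p : Fin dA × Fin dB,
          star ((U * Matrix.diagonal (fun c => if c ∈ S then (1:ℂ) else 0) * N) p.1 p.2)
          * ((U * Matrix.diagonal (fun c => if c ∈ S' then (1:ℂ) else 0) * N) p.1 p.2) := by
        simp only [indicator_mul]
    _ = Matrix.trace ((U * Matrix.diagonal (fun c => if c ∈ S then (1:ℂ) else 0) * N)ᴴ
          * (U * Matrix.diagonal (fun c => if c ∈ S' then (1:ℂ) else 0) * N)) :=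
        sum_conj_mul_eq_trace _ _
    _ = ∑ c ∈ S ∩ S', (e c : ℂ) := by
        set DS := Matrix.diagonal (fun c => if c ∈ S then (1:ℂ) else 0) with hDS
        set DS' := Matrix.diagonal (fun c => if c ∈ S' then (1:ℂ) else 0) with hDS'
        have h1 : (U * DS * N)ᴴ * (U * DS' * N) = Nᴴ * (DS * DS' * N) := by
          rw [Matrix.conjTranspose_mul, Matrix.conjTranspose_mul, hDS, hD S, ← hDS]
          calc Nᴴ * (DS * Uᴴ) * (U * DS' * N)
              = Nᴴ * (DS * (Uᴴ * U) * DS' * N) := by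
                simp only [Matrix.mul_assoc]
            _ = Nᴴ * (DS * DS' * N) := by rw [hUU]; simp only [Matrix.mul_one, Matrix.mul_assoc]
        rw [h1, Matrix.trace_mul_comm]
        have h2 : DS * DS' * N * Nᴴ = (DS * DS') * (N * Nᴴ) := by simp only [Matrix.mul_assoc]
        rw [h2, hNN, hDS, hDS', Matrix.diagonal_mul_diagonal, Matrix.diagonal_mul_diagonal,
          Matrix.trace_diagonal]
        rw [show ∀ f : Fin dA → ℂ, ∑ c, f c = ∑ c ∈ Finset.univ, f c from fun _ => rfl]
        rw [← Finset.univ_inter (S ∩ S'), ← Finset.sum_ite_mem]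
        refine Finset.sum_congr rfl fun c _ => ?_
        by_cases h : c ∈ S <;> by_cases h' : c ∈ S' <;> simp [h, h', Finset.mem_inter]

/-- An `m × n` quantum magic rectangle strategy: Alice's observables `A i j` are Hermitian
unitaries commuting within each row with each row product `I`; Bob's observables `B i j` are
Hermitian unitaries commuting within each column with each column product `-I`; `ψ` is a unit
vector in the (Kronecker) tensor product; and the strategy is perfect:
`⟨ψ, (A i j ⊗ B i j) ψ⟩ = 1` for all cells `(i, j)`. -/
def IsPerfectStrategy {m n : ℕ} {ιA ιB : Type*}
    [Fintype ιA] [DecidableEq ιA] [Fintype ιB] [DecidableEq ιB]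
    (A : Fin m → Fin n → Matrix ιA ιA ℂ)
    (B : Fin m → Fin n → Matrix ιB ιB ℂ)
    (ψ : ιA × ιB → ℂ) : Prop :=
  (∀ i j, (A i j).IsHermitian) ∧
  (∀ i j, A i j * A i j = 1) ∧
  (∀ i j j', A i j * A i j' = A i j' * A i j) ∧
  (∀ i, (List.ofFn fun j => A i j).prod = 1) ∧
  (∀ i j, (B i j).IsHermitian) ∧
  (∀ i j, B i j * B i j = 1) ∧
  (∀ i i' j, B i j * B i' j = B i' j * B i j) ∧
  (∀ j, (List.ofFn fun i => B i j).prod = -1) ∧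
  star ψ ⬝ᵥ ψ = 1 ∧
  (∀ i j, star ψ ⬝ᵥ ((A i j ⊗ₖ B i j) *ᵥ ψ) = 1)

/-- structure theorem for PQSS: every perfect quantum solution state is a
combination `ψ = Σ_k β_k ψ_k` of pairwise orthogonal maximally entangled unit vectors `ψ_k`,
each of which is itself a perfect solution state for the same observables, with `β_k > 0`,
`Σ_k β_k² = 1`, and pairwise distinct Schmidt coefficients `β_k / √(r_k)`. -/
theorem pqss_structure_theorem
    {m n dA dB : ℕ}
    (A : Fin m → Fin n → Matrix (Fin dA) (Fin dA) ℂ)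
    (B : Fin m → Fin n → Matrix (Fin dB) (Fin dB) ℂ)
    (ψ : Fin dA × Fin dB → ℂ)
    (h : IsPerfectStrategy A B ψ) :
    ∃ (K : ℕ) (_ : 1 ≤ K) (β : Fin K → ℝ) (r : Fin K → ℕ)
      (u : (Σ k : Fin K, Fin (r k)) → Fin dA → ℂ)
      (v : (Σ k : Fin K, Fin (r k)) → Fin dB → ℂ)
      (Ψ : Fin K → Fin dA × Fin dB → ℂ),
      (∀ k, 0 < β k) ∧
      (∑ k, (β k) ^ 2 = 1) ∧
      (∀ k, 0 < r k) ∧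
      (∀ l l', star (u l) ⬝ᵥ u l' = if l = l' then 1 else 0) ∧
      (∀ l l', star (v l) ⬝ᵥ v l' = if l = l' then 1 else 0) ∧
      (∀ k k', star (Ψ k) ⬝ᵥ Ψ k' = if k = k' then 1 else 0) ∧
      (ψ = ∑ k, (β k : ℂ) • Ψ k) ∧
      (∀ k, Ψ k = ((Real.sqrt (r k) : ℂ))⁻¹ •
        ∑ l : Fin (r k), fun p : Fin dA × Fin dB => u ⟨k, l⟩ p.1 * v ⟨k, l⟩ p.2) ∧
      (∀ k k', β k / Real.sqrt (r k) = β k' / Real.sqrt (r k') → k = k') ∧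
      (∀ k i j, star (Ψ k) ⬝ᵥ ((A i j ⊗ₖ B i j) *ᵥ Ψ k) = 1) := by
  classical
  obtain ⟨hAH, hA2, -, -, hBH, hB2, -, -, hψ1, hperf⟩ := h
  set M : Matrix (Fin dA) (Fin dB) ℂ := Matrix.of (fun a b => ψ (a, b)) with hM
  have hψM : ψ = fun p => M p.1 p.2 := by funext p; rfl
  have hρH : (M * Mᴴ).IsHermitian := Matrix.isHermitian_mul_conjTranspose_self M
  set U : Matrix (Fin dA) (Fin dA) ℂ := (hρH.eigenvectorUnitary : Matrix (Fin dA) (Fin dA) ℂ)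
    with hU
  set e : Fin dA → ℝ := hρH.eigenvalues with he
  have hUU : Uᴴ * U = 1 := by
    have := (Matrix.mem_unitaryGroup_iff').mp hρH.eigenvectorUnitary.2
    rwa [Matrix.star_eq_conjTranspose] at this
  have hUU' : U * Uᴴ = 1 := by
    have := (Matrix.mem_unitaryGroup_iff).mp hρH.eigenvectorUnitary.2
    rwa [Matrix.star_eq_conjTranspose] at this
  set N : Matrix (Fin dA) (Fin dB) ℂ := Uᴴ * M with hN
  have hspec : Uᴴ * (M * Mᴴ) * U = Matrix.diagonal (fun c => (e c : ℂ)) := by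
    have h0 := hρH.conjStarAlgAut_star_eigenvectorUnitary
    rw [Unitary.conjStarAlgAut_star_apply] at h0
    exact h0
  have hNN : N * Nᴴ = Matrix.diagonal (fun c => (e c : ℂ)) := by
    rw [hN, Matrix.conjTranspose_mul, Matrix.conjTranspose_conjTranspose]
    calc Uᴴ * M * (Mᴴ * U) = Uᴴ * (M * Mᴴ) * U := by simp only [Matrix.mul_assoc]
      _ = _ := hspec
  -- fixed points
  have hfix : ∀ i j, A i j * M * (B i j)ᵀ = M := by
    intro i j
    have hKH : (A i j ⊗ₖ B i j).IsHermitian := by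
      have : (A i j ⊗ₖ B i j)ᴴ = A i j ⊗ₖ B i j := by
        ext p q
        obtain ⟨a, b⟩ := p
        obtain ⟨a', b'⟩ := q
        simp only [Matrix.conjTranspose_apply, kroneckerMap_apply, star_mul']
        rw [← Matrix.conjTranspose_apply (A i j), ← Matrix.conjTranspose_apply (B i j),
          (hAH i j).eq, (hBH i j).eq]
      exact this
    have hK2 : (A i j ⊗ₖ B i j) * (A i j ⊗ₖ B i j) = 1 := by
      rw [← Matrix.mul_kronecker_mul, hA2, hB2, Matrix.one_kronecker_one]
    have hfx := fixed_of_inner_one _ hKH hK2 ψ hψ1 (hperf i j)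
    rw [hψM, kron_mulVec] at hfx
    ext a b
    exact congrFun hfx (a, b)
  -- eigenvalues are nonnegative, zero rows vanish
  have he_eq : ∀ c, e c = ∑ b, Complex.normSq (N c b) := by
    intro c
    have h0 := congrFun (congrFun hNN c) c
    rw [Matrix.diagonal_apply_eq] at h0
    have h1 : (N * Nᴴ) c c = ((∑ b, Complex.normSq (N c b) : ℝ) : ℂ) := by
      rw [Matrix.mul_apply]
      push_cast
      exact Finset.sum_congr rfl fun b _ => by
        rw [Matrix.conjTranspose_apply, show star (N c b) = (starRingEnd ℂ) (N c b) from rfl,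
          Complex.mul_conj]
    rw [h1] at h0
    exact_mod_cast h0.symm
  have he_nonneg : ∀ c, 0 ≤ e c := fun c =>
    (he_eq c) ▸ Finset.sum_nonneg fun b _ => Complex.normSq_nonneg _
  have hrow_zero : ∀ c, e c = 0 → ∀ b, N c b = 0 := by
    intro c hc b
    have h0 : ∑ b, Complex.normSq (N c b) = 0 := by rw [← he_eq c, hc]
    have h1 := (Finset.sum_eq_zero_iff_of_nonneg
      (fun b _ => Complex.normSq_nonneg (N c b))).mp h0 b (Finset.mem_univ b)
    exact Complex.normSq_eq_zero.mp h1
  -- trace is one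
  have htr : ∑ c, e c = 1 := by
    have h1 : Matrix.trace (N * Nᴴ) = ∑ c, (e c : ℂ) := by rw [hNN, Matrix.trace_diagonal]
    have h3 : Nᴴ * N = Mᴴ * M := by
      rw [hN, Matrix.conjTranspose_mul, Matrix.conjTranspose_conjTranspose]
      calc Mᴴ * U * (Uᴴ * M) = Mᴴ * (U * Uᴴ) * M := by simp only [Matrix.mul_assoc]
        _ = Mᴴ * M := by rw [hUU', Matrix.mul_one]
    have h2 : Matrix.trace (N * Nᴴ) = (1 : ℂ) := by
      rw [Matrix.trace_mul_comm, h3, ← sum_conj_mul_eq_trace M M, ← hψ1, hψM]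
      simp [dotProduct]
    have h4 : ((∑ c, e c : ℝ) : ℂ) = 1 := by
      push_cast
      rw [← h1, h2]
    exact_mod_cast h4
  -- the distinct positive eigenvalues
  set T : Finset ℝ := (Finset.univ.image e).filter (fun x => 0 < x) with hT
  set K := T.card with hKdef
  have hKpos : 1 ≤ K := by
    have hex : ∃ c, 0 < e c := by
      by_contra hc
      push_neg at hc
      have hz : ∀ c ∈ Finset.univ, e c = 0 := fun c _ => le_antisymm (hc c) (he_nonneg c)
      rw [Finset.sum_congr rfl hz, Finset.sum_const_zero] at htr
      norm_num at htr
    obtain ⟨c, hc⟩ := hex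
    have : e c ∈ T := Finset.mem_filter.mpr ⟨Finset.mem_image_of_mem e (Finset.mem_univ c), hc⟩
    exact Finset.card_pos.mpr ⟨e c, this⟩
  set oiso := T.orderIsoOfFin (hKdef.symm) with hoiso
  set lam : Fin K → ℝ := fun k => (oiso k : ℝ) with hlam
  have hlam_mem : ∀ k, lam k ∈ T := fun k => (oiso k).2
  have hlam_pos : ∀ k, 0 < lam k := fun k => (Finset.mem_filter.mp (hlam_mem k)).2
  have hlam_inj : Function.Injective lam := by
    intro k k' hkk'
    exact oiso.injective (Subtype.ext hkk')
  have hlam_surj : ∀ x, x ∈ T → ∃ k, lam k = x := by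
    intro x hx
    exact ⟨oiso.symm ⟨x, hx⟩, by rw [hlam]; exact congrArg Subtype.val (oiso.apply_symm_apply ⟨x, hx⟩)⟩
  -- the classes
  set cls : Fin K → Finset (Fin dA) := fun k => Finset.univ.filter (fun c => e c = lam k) with hcls
  set r : Fin K → ℕ := fun k => (cls k).card with hr
  have hrpos : ∀ k, 0 < r k := by
    intro k
    obtain ⟨hmem, -⟩ := Finset.mem_filter.mp (hlam_mem k)
    obtain ⟨c, -, hc⟩ := Finset.mem_image.mp hmem
    exact Finset.card_pos.mpr ⟨c, Finset.mem_filter.mpr ⟨Finset.mem_univ c, hc⟩⟩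
  have hcls_mem : ∀ k c, c ∈ cls k ↔ e c = lam k := by
    intro k c
    rw [hcls, Finset.mem_filter]
    exact ⟨fun hx => hx.2, fun hx => ⟨Finset.mem_univ c, hx⟩⟩
  have hcls_disj : ∀ k k', k ≠ k' → cls k ∩ cls k' = ∅ := by
    intro k k' hkk'
    rw [Finset.eq_empty_iff_forall_notMem]
    intro c hc
    obtain ⟨h1, h2⟩ := Finset.mem_inter.mp hc
    exact hkk' (hlam_inj (((hcls_mem k c).mp h1).symm.trans ((hcls_mem k' c).mp h2)))
  have hcls_sum : ∀ k, ∑ c ∈ cls k, e c = r k * lam k := by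
    intro k
    rw [Finset.sum_congr rfl (fun c hc => (hcls_mem k c).mp hc), Finset.sum_const,
      nsmul_eq_mul, hr]
  -- partition lemmas
  have hpart : ∀ {α : Type} [AddCommMonoid α] (f : Fin dA → α),
      (∑ k, ∑ c ∈ cls k, f c) = ∑ c, if 0 < e c then f c else 0 := by
    intro α inst f
    have h1 : ∀ k, ∑ c ∈ cls k, f c = ∑ c, if e c = lam k then f c else 0 := by
      intro k
      rw [hcls, Finset.sum_filter]
    simp only [h1]
    rw [Finset.sum_comm]
    refine Finset.sum_congr rfl fun c _ => ?_
    by_cases hc : 0 < e c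
    · have hcT : e c ∈ T :=
        Finset.mem_filter.mpr ⟨Finset.mem_image_of_mem e (Finset.mem_univ c), hc⟩
      obtain ⟨k0, hk0⟩ := hlam_surj (e c) hcT
      rw [if_pos hc]
      rw [Finset.sum_eq_single k0]
      · exact if_pos hk0.symm
      · intro k _ hk
        exact if_neg fun hek => hk (hlam_inj ((hek.symm).trans hk0.symm))
      · intro hk'
        exact absurd (Finset.mem_univ k0) hk'
    · rw [if_neg hc]
      refine Finset.sum_eq_zero fun k _ => ?_
      exact if_neg fun hek => hc (by rw [hek]; exact hlam_pos k)
  -- data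
  set β : Fin K → ℝ := fun k => Real.sqrt (r k * lam k) with hβ
  have hβpos : ∀ k, 0 < β k := fun k =>
    Real.sqrt_pos.mpr (mul_pos (by exact_mod_cast hrpos k) (hlam_pos k))
  have hβsq : ∀ k, β k ^ 2 = r k * lam k := fun k =>
    Real.sq_sqrt (le_of_lt (mul_pos (by exact_mod_cast hrpos k) (hlam_pos k)))
  have hβsplit : ∀ k, β k = Real.sqrt (r k) * Real.sqrt (lam k) := fun k =>
    Real.sqrt_mul (Nat.cast_nonneg (r k)) (lam k)
  set cIdx : ∀ k : Fin K, Fin (r k) → Fin dA := fun k i => ((cls k).equivFin.symm i : Fin dA)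
    with hcIdx
  have hcIdx_mem : ∀ k i, cIdx k i ∈ cls k := fun k i => ((cls k).equivFin.symm i).2
  have hcIdx_e : ∀ k i, e (cIdx k i) = lam k := fun k i => (hcls_mem k _).mp (hcIdx_mem k i)
  have hcIdx_inj : ∀ k i i', cIdx k i = cIdx k i' → i = i' := by
    intro k i i' hii'
    have := (cls k).equivFin.symm.injective (Subtype.ext hii')
    exact this
  have hl_inj : ∀ l l' : (Σ k : Fin K, Fin (r k)), cIdx l.1 l.2 = cIdx l'.1 l'.2 → l = l' := by
    rintro ⟨k, i⟩ ⟨k', i'⟩ hq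
    have hk : k = k' := hlam_inj (by rw [← hcIdx_e k i, hq, hcIdx_e])
    subst hk
    exact congrArg (Sigma.mk k) (hcIdx_inj k i i' hq)
  have hsum_cls : ∀ {α : Type} [AddCommMonoid α] (k : Fin K) (f : Fin dA → α),
      ∑ i : Fin (r k), f (cIdx k i) = ∑ c ∈ cls k, f c := by
    intro α _ k f
    rw [← Finset.sum_coe_sort (cls k) f]
    exact Fintype.sum_equiv (cls k).equivFin.symm _ _ (fun i => rfl)
  set u : (Σ k : Fin K, Fin (r k)) → Fin dA → ℂ := fun l a => U a (cIdx l.1 l.2) with hu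
  set v : (Σ k : Fin K, Fin (r k)) → Fin dB → ℂ :=
    fun l b => ((Real.sqrt (lam l.1) : ℝ) : ℂ)⁻¹ * N (cIdx l.1 l.2) b with hv
  set Ψ : Fin K → Fin dA × Fin dB → ℂ :=
    fun k p => ((β k : ℝ) : ℂ)⁻¹ * ∑ c ∈ cls k, U p.1 c * N c p.2 with hΨ
  -- item : sum of squares
  have hsumsq : ∑ k, (β k) ^ 2 = 1 := by
    have h1 : ∑ k, (β k) ^ 2 = ∑ k, ∑ c ∈ cls k, e c := by
      refine Finset.sum_congr rfl fun k _ => ?_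
      rw [hβsq, hcls_sum]
    rw [h1, hpart fun c => e c]
    rw [← htr]
    refine Finset.sum_congr rfl fun c _ => ?_
    by_cases hc : 0 < e c
    · rw [if_pos hc]
    · rw [if_neg hc, le_antisymm (not_lt.mp hc) (he_nonneg c)]
  -- item : u orthonormal
  have hu_on : ∀ l l', star (u l) ⬝ᵥ u l' = if l = l' then 1 else 0 := by
    intro l l'
    have h1 : star (u l) ⬝ᵥ u l' = (Uᴴ * U) (cIdx l.1 l.2) (cIdx l'.1 l'.2) := by
      rw [Matrix.mul_apply]
      refine Finset.sum_congr rfl fun a _ => ?_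
      rw [Matrix.conjTranspose_apply]
      rfl
    rw [h1, hUU, Matrix.one_apply]
    by_cases hll : l = l'
    · rw [if_pos hll, if_pos (by rw [hll])]
    · rw [if_neg hll, if_neg (fun hq => hll (hl_inj l l' hq))]
  -- item : v orthonormal
  have hv_on : ∀ l l', star (v l) ⬝ᵥ v l' = if l = l' then 1 else 0 := by
    intro l l'
    have hNc : ∀ c c' : Fin dA, (∑ b, star (N c b) * N c' b)
        = if c' = c then ((e c' : ℝ) : ℂ) else 0 := by
      intro c c'
      have h0 := congrFun (congrFun hNN c') c
      rw [Matrix.mul_apply] at h0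
      rw [Matrix.diagonal_apply] at h0
      rw [← h0]
      refine Finset.sum_congr rfl fun b _ => ?_
      rw [Matrix.conjTranspose_apply]
      ring
    have h1 : star (v l) ⬝ᵥ v l'
        = ((Real.sqrt (lam l.1) : ℝ) : ℂ)⁻¹ * ((Real.sqrt (lam l'.1) : ℝ) : ℂ)⁻¹ *
          ∑ b, star (N (cIdx l.1 l.2) b) * N (cIdx l'.1 l'.2) b := by
      rw [Finset.mul_sum]
      refine Finset.sum_congr rfl fun b _ => ?_
      simp only [hv, Pi.star_apply, star_mul', star_inv₀, Complex.star_def, Complex.conj_ofReal]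
      ring
    rw [h1, hNc]
    by_cases hll : l = l'
    · subst hll
      rw [if_pos rfl, if_pos rfl]
      have hs : ((Real.sqrt (lam l.1) : ℝ) : ℂ) * ((Real.sqrt (lam l.1) : ℝ) : ℂ)
          = ((lam l.1 : ℝ) : ℂ) := by
        rw [← Complex.ofReal_mul, Real.mul_self_sqrt (le_of_lt (hlam_pos l.1))]
      have hne : ((Real.sqrt (lam l.1) : ℝ) : ℂ) ≠ 0 := by
        simp only [ne_eq, Complex.ofReal_eq_zero]
        exact ne_of_gt (Real.sqrt_pos.mpr (hlam_pos l.1))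
      rw [hcIdx_e]
      field_simp
      rw [← hs]
      ring
    · rw [if_neg hll, if_neg (fun hq => hll (hl_inj l l' hq.symm)), mul_zero]
  -- Ψ inner products
  have hΨkey : ∀ k k', star (Ψ k) ⬝ᵥ Ψ k'
      = ((β k : ℝ) : ℂ)⁻¹ * ((β k' : ℝ) : ℂ)⁻¹ * ∑ c ∈ cls k ∩ cls k', ((e c : ℝ) : ℂ) := by
    intro k k'
    rw [← inner_sums U N e hUU hNN (cls k) (cls k'), Finset.mul_sum]
    refine Finset.sum_congr rfl fun p _ => ?_
    simp only [hΨ, Pi.star_apply, star_mul', star_inv₀, Complex.star_def, Complex.conj_ofReal]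
    ring
  have hΨ_on : ∀ k k', star (Ψ k) ⬝ᵥ Ψ k' = if k = k' then 1 else 0 := by
    intro k k'
    rw [hΨkey]
    by_cases hkk : k = k'
    · subst hkk
      rw [if_pos rfl, Finset.inter_self]
      have h2 : ∑ c ∈ cls k, ((e c : ℝ) : ℂ) = (((r k : ℝ) * lam k : ℝ) : ℂ) := by
        rw [← Complex.ofReal_sum, ← hcls_sum k]
      rw [h2, ← hβsq k]
      have hne : ((β k : ℝ) : ℂ) ≠ 0 := by
        simp only [ne_eq, Complex.ofReal_eq_zero]
        exact ne_of_gt (hβpos k)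
      push_cast
      field_simp
    · rw [if_neg hkk, hcls_disj k k' hkk, Finset.sum_empty, mul_zero]
  -- decomposition
  have hdecomp : ψ = ∑ k, ((β k : ℝ) : ℂ) • Ψ k := by
    funext p
    rw [hψM]
    have h1 : (∑ k, ((β k : ℝ) : ℂ) • Ψ k) p = ∑ k, ((β k : ℝ) : ℂ) * Ψ k p := by
      rw [Finset.sum_apply]
      exact Finset.sum_congr rfl fun k _ => rfl
    rw [h1]
    have h2 : ∀ k, ((β k : ℝ) : ℂ) * Ψ k p = ∑ c ∈ cls k, U p.1 c * N c p.2 := by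
      intro k
      simp only [hΨ]
      have hne : ((β k : ℝ) : ℂ) ≠ 0 := by
        simp only [ne_eq, Complex.ofReal_eq_zero]
        exact ne_of_gt (hβpos k)
      field_simp
    rw [Finset.sum_congr rfl fun k _ => h2 k, hpart fun c => U p.1 c * N c p.2]
    have h3 : ∑ c, (if 0 < e c then U p.1 c * N c p.2 else 0) = ∑ c, U p.1 c * N c p.2 := by
      refine Finset.sum_congr rfl fun c _ => ?_
      by_cases hc : 0 < e c
      · rw [if_pos hc]
      · rw [if_neg hc, hrow_zero c (le_antisymm (not_lt.mp hc) (he_nonneg c)) p.2, mul_zero]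
    rw [h3]
    have h4 : U * N = M := by
      rw [hN, ← Matrix.mul_assoc, hUU', Matrix.one_mul]
    calc M p.1 p.2 = (U * N) p.1 p.2 := by rw [h4]
      _ = ∑ c, U p.1 c * N c p.2 := Matrix.mul_apply
  -- Ψ formula
  have hΨform : ∀ k, Ψ k = ((Real.sqrt (r k) : ℂ))⁻¹ •
      ∑ l : Fin (r k), fun p : Fin dA × Fin dB => u ⟨k, l⟩ p.1 * v ⟨k, l⟩ p.2 := by
    intro k
    funext p
    rw [Pi.smul_apply, Finset.sum_apply, smul_eq_mul]
    have h1 : ∀ l : Fin (r k), u ⟨k, l⟩ p.1 * v ⟨k, l⟩ p.2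
        = ((Real.sqrt (lam k) : ℝ) : ℂ)⁻¹ * (U p.1 (cIdx k l) * N (cIdx k l) p.2) := by
      intro l
      simp only [hu, hv]
      ring
    rw [Finset.sum_congr rfl fun l _ => h1 l, ← Finset.mul_sum,
      hsum_cls k (fun c => U p.1 c * N c p.2)]
    simp only [hΨ]
    have h2 : ((β k : ℝ) : ℂ)⁻¹
        = ((Real.sqrt (r k) : ℝ) : ℂ)⁻¹ * ((Real.sqrt (lam k) : ℝ) : ℂ)⁻¹ := by
      rw [← mul_inv, ← Complex.ofReal_mul, ← hβsplit k]
    rw [h2]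
    ring
  -- distinct Schmidt coefficients
  have hβdiv : ∀ k, β k / Real.sqrt (r k) = Real.sqrt (lam k) := by
    intro k
    rw [hβsplit k, mul_comm, mul_div_assoc, div_self
      (ne_of_gt (Real.sqrt_pos.mpr (by exact_mod_cast hrpos k))), mul_one]
  have hdist : ∀ k k', β k / Real.sqrt (r k) = β k' / Real.sqrt (r k') → k = k' := by
    intro k k' hkk
    rw [hβdiv, hβdiv] at hkk
    refine hlam_inj ?_
    have := congrArg (fun x : ℝ => x ^ 2) hkk
    simpa [Real.sq_sqrt (le_of_lt (hlam_pos k)), Real.sq_sqrt (le_of_lt (hlam_pos k'))] using this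
  -- perfectness of components
  have hperfk : ∀ k i j, star (Ψ k) ⬝ᵥ ((A i j ⊗ₖ B i j) *ᵥ Ψ k) = 1 := by
    intro k i j
    have hfixk : A i j * M * (B i j)ᵀ = M := hfix i j
    have hAH' : (A i j)ᴴ = A i j := (hAH i j).eq
    have hBT2 : (B i j)ᵀ * (B i j)ᵀ = 1 := by
      rw [← Matrix.transpose_mul, hB2, Matrix.transpose_one]
    have hBTH : ((B i j)ᵀ)ᴴ = (B i j)ᵀ := by
      ext x y
      rw [Matrix.conjTranspose_apply, Matrix.transpose_apply, Matrix.transpose_apply,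
        ← Matrix.conjTranspose_apply, (hBH i j).eq]
    have cancelB : ∀ X : Matrix (Fin dB) (Fin dA) ℂ, (B i j)ᵀ * ((B i j)ᵀ * X) = X := by
      intro X
      rw [← Matrix.mul_assoc, hBT2, Matrix.one_mul]
    have h3 : (A i j * M * (B i j)ᵀ) * (A i j * M * (B i j)ᵀ)ᴴ = A i j * (M * Mᴴ) * A i j := by
      simp only [Matrix.conjTranspose_mul, hBTH, hAH']
      simp only [Matrix.mul_assoc]
      rw [cancelB]
    have h1 : A i j * (M * Mᴴ) * A i j = M * Mᴴ := by
      rw [← h3, hfixk]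
    have hcomm : A i j * (M * Mᴴ) = (M * Mᴴ) * A i j := by
      have h2 := congrArg (fun X => X * A i j) h1
      calc A i j * (M * Mᴴ) = A i j * (M * Mᴴ) * (A i j * A i j) := by
            rw [hA2, Matrix.mul_one]
        _ = A i j * (M * Mᴴ) * A i j * A i j := by simp only [Matrix.mul_assoc]
        _ = (M * Mᴴ) * A i j := h2
    set At := Uᴴ * A i j * U with hAt
    have hAtD : At * Matrix.diagonal (fun c => ((e c : ℝ) : ℂ))
        = Matrix.diagonal (fun c => ((e c : ℝ) : ℂ)) * At := by
      rw [← hspec]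
      calc Uᴴ * A i j * U * (Uᴴ * (M * Mᴴ) * U)
          = Uᴴ * (A i j * (U * (Uᴴ * ((M * Mᴴ) * U)))) := by simp only [Matrix.mul_assoc]
        _ = Uᴴ * (A i j * ((M * Mᴴ) * U)) := by
            rw [← Matrix.mul_assoc U Uᴴ, hUU', Matrix.one_mul]
        _ = Uᴴ * ((A i j * (M * Mᴴ)) * U) := by simp only [Matrix.mul_assoc]
        _ = Uᴴ * (((M * Mᴴ) * A i j) * U) := by rw [hcomm]
        _ = Uᴴ * (M * Mᴴ) * U * (Uᴴ * A i j * U) := by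
            simp only [Matrix.mul_assoc]
            rw [← Matrix.mul_assoc U Uᴴ, hUU', Matrix.one_mul]
    have hzero : ∀ c c', e c ≠ e c' → At c c' = 0 := by
      intro c c' hcc
      have h0 := congrFun (congrFun hAtD c) c'
      rw [Matrix.mul_diagonal, Matrix.diagonal_mul] at h0
      have h4 : At c c' * (((e c' : ℝ) : ℂ) - ((e c : ℝ) : ℂ)) = 0 := by
        rw [mul_sub, h0]; ring
      rcases mul_eq_zero.mp h4 with h5 | h5
      · exact h5
      · exfalso
        apply hcc
        have h6 := sub_eq_zero.mp h5
        exact_mod_cast h6.symm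
    set Dk := Matrix.diagonal (fun c => if c ∈ cls k then (1:ℂ) else 0) with hDk
    have hAtDk : At * Dk = Dk * At := by
      ext c c'
      rw [hDk, Matrix.mul_diagonal, Matrix.diagonal_mul]
      by_cases hcc : e c = e c'
      · have hiff : (c ∈ cls k) ↔ (c' ∈ cls k) := by rw [hcls_mem, hcls_mem, hcc]
        by_cases h5 : c' ∈ cls k
        · rw [if_pos h5, if_pos (hiff.mpr h5)]; ring
        · rw [if_neg h5, if_neg (fun hx => h5 (hiff.mp hx))]; ring
      · rw [hzero c c' hcc]; ring
    have hAU : U * At = A i j * U := by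
      rw [hAt, ← Matrix.mul_assoc, ← Matrix.mul_assoc, hUU', Matrix.one_mul]
    have hAtN : At * (N * (B i j)ᵀ) = N := by
      rw [hAt, hN]
      calc Uᴴ * A i j * U * (Uᴴ * M * (B i j)ᵀ)
          = Uᴴ * (A i j * (U * (Uᴴ * (M * (B i j)ᵀ)))) := by simp only [Matrix.mul_assoc]
        _ = Uᴴ * (A i j * (M * (B i j)ᵀ)) := by
            rw [← Matrix.mul_assoc U Uᴴ, hUU', Matrix.one_mul]
        _ = Uᴴ * (A i j * M * (B i j)ᵀ) := by simp only [Matrix.mul_assoc]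
        _ = Uᴴ * M := by rw [hfixk]
    have hswap : ∀ X : Matrix (Fin dA) (Fin dB) ℂ, At * (Dk * X) = Dk * (At * X) := by
      intro X
      rw [← Matrix.mul_assoc, hAtDk, Matrix.mul_assoc]
    have hfinal : A i j * (U * Dk * N) * (B i j)ᵀ = U * Dk * N := by
      calc A i j * (U * Dk * N) * (B i j)ᵀ
          = A i j * U * (Dk * (N * (B i j)ᵀ)) := by simp only [Matrix.mul_assoc]
        _ = U * (At * (Dk * (N * (B i j)ᵀ))) := by rw [← hAU, Matrix.mul_assoc]
        _ = U * (Dk * (At * (N * (B i j)ᵀ))) := by rw [hswap]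
        _ = U * (Dk * N) := by rw [hAtN]
        _ = U * Dk * N := by rw [Matrix.mul_assoc]
    have hΨmat : Ψ k = fun p : Fin dA × Fin dB =>
        (((β k : ℝ) : ℂ)⁻¹ • (U * Dk * N)) p.1 p.2 := by
      funext p
      simp only [hΨ, Matrix.smul_apply, hDk, indicator_mul, smul_eq_mul]
    have hvec : (A i j ⊗ₖ B i j) *ᵥ Ψ k = Ψ k := by
      rw [hΨmat, kron_mulVec]
      have h7 : A i j * (((β k : ℝ) : ℂ)⁻¹ • (U * Dk * N)) * (B i j)ᵀ
          = ((β k : ℝ) : ℂ)⁻¹ • (U * Dk * N) := by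
        rw [Matrix.mul_smul, Matrix.smul_mul, hfinal]
      rw [h7]
    rw [hvec]
    have h8 := hΨ_on k k
    rwa [if_pos rfl] at h8
  exact ⟨K, hKpos, β, r, u, v, Ψ, hβpos, hsumsq, hrpos, hu_on, hv_on, hΨ_on, hdecomp, hΨform,
    hdist, hperfk⟩
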